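/- Let T be a triangulated category equipped with a t-structure, with truncation functors τ^{≤0} and τ^{≥1}, canonical natural transformations ι : τ^{≤0} → id and π : id → τ^{≥1}, and for every object X a distinguished triangle τ^{≤0}X → X → τ^{≥1}X → (τ^{≤0}X)[1]. Let A → B → C → A[1] be a distinguished triangle with maps a, b, c, and suppose that the composite τ^{≤0}C → C → A[1] → (τ^{≥1}A)[1] (namely ι_C followed by c followed by (π_A)[1]) is zero. Then there exists a unique morphism c₀ : τ^{≤0}C → (τ^{≤0}A)[1] such that c₀ followed by (ι_A)[1] equals ι_C followed by c, and a unique morphism c₁ : τ^{≥1}C → (τ^{≥1}A)[1] such that π_C followed by c₁ equals c followed by (π_A)[1]; moreover the triangles τ^{≤0}A → τ^{≤0}B → τ^{≤0}C → (τ^{≤0}A)[1] (with maps τ^{≤0}a, τ^{≤0}b, c₀) and τ^{≥1}A → τ^{≥1}B → τ^{≥1}C → (τ^{≥1}A)[1] (with maps τ^{≥1}a, τ^{≥1}b, c₁) are distinguished. -/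

import Mathlib

open CategoryTheory CategoryTheory.Limits CategoryTheory.Pretriangulated
open CategoryTheory.Triangulated

/-- Let `T` be a triangulated category with a t-structure `t`, with truncation
functors `τ≤0 = L` and `τ≥1 = G` (i.e. `L X` satisfies `t.le 0`, `G X` satisfies
`t.ge 1`), canonical transformations `ι : L ⟶ 𝟭` and `π : 𝟭 ⟶ G`, and connecting
maps `δ X : G X ⟶ (L X)⟦1⟧` making `L X → X → G X → (L X)⟦1⟧` distinguished for
every `X`.  Let `A →a B →b C' →c A⟦1⟧` be a distinguished triangle such that the
composite `ι_{C'} ≫ c ≫ (π_A)⟦1⟧` vanishes.  Then there is a unique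
`c₀ : L C' ⟶ (L A)⟦1⟧` with `c₀ ≫ (ι_A)⟦1⟧ = ι_{C'} ≫ c` and a unique
`c₁ : G C' ⟶ (G A)⟦1⟧` with `π_{C'} ≫ c₁ = c ≫ (π_A)⟦1⟧`; moreover the resulting
truncated triangles `L A → L B → L C' → (L A)⟦1⟧` and `G A → G B → G C' → (G A)⟦1⟧`
are distinguished. -/
theorem truncation_nine_diagram
    {C : Type*} [Category C] [HasZeroObject C] [HasShift C ℤ] [Preadditive C]
    [∀ n : ℤ, (CategoryTheory.shiftFunctor C n).Additive] [Pretriangulated C]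
    (t : TStructure C)
    (L G : C ⥤ C) (ι : L ⟶ 𝟭 C) (π : 𝟭 C ⟶ G)
    (δ : ∀ X : C, G.obj X ⟶ (L.obj X)⟦(1 : ℤ)⟧)
    (hL : ∀ X : C, t.le 0 (L.obj X)) (hG : ∀ X : C, t.ge 1 (G.obj X))
    (htr : ∀ X : C, Triangle.mk (ι.app X) (π.app X) (δ X) ∈ distTriang C)
    (A B C' : C) (a : A ⟶ B) (b : B ⟶ C') (c : C' ⟶ A⟦(1 : ℤ)⟧)
    (hdist : Triangle.mk a b c ∈ distTriang C)
    (hz : ι.app C' ≫ c ≫ (π.app A)⟦(1 : ℤ)⟧' = 0) :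
    (∃! c₀ : L.obj C' ⟶ (L.obj A)⟦(1 : ℤ)⟧,
        c₀ ≫ (ι.app A)⟦(1 : ℤ)⟧' = ι.app C' ≫ c) ∧
    (∀ c₀ : L.obj C' ⟶ (L.obj A)⟦(1 : ℤ)⟧,
        c₀ ≫ (ι.app A)⟦(1 : ℤ)⟧' = ι.app C' ≫ c →
        Triangle.mk (L.map a) (L.map b) c₀ ∈ distTriang C) ∧
    (∃! c₁ : G.obj C' ⟶ (G.obj A)⟦(1 : ℤ)⟧,
        π.app C' ≫ c₁ = c ≫ (π.app A)⟦(1 : ℤ)⟧') ∧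
    (∀ c₁ : G.obj C' ⟶ (G.obj A)⟦(1 : ℤ)⟧,
        π.app C' ≫ c₁ = c ≫ (π.app A)⟦(1 : ℤ)⟧' →
        Triangle.mk (G.map a) (G.map b) c₁ ∈ distTriang C) := by
  classical
  -- basic vanishing helpers
  have z0 : ∀ {X Y : C}, t.le 0 X → t.ge 1 Y → ∀ f : X ⟶ Y, f = 0 :=
    fun hX hY f => t.zero' f hX hY
  have hLE1 : ∀ X : C, t.le 0 ((L.obj X)⟦(1 : ℤ)⟧) := fun X =>
    t.le_monotone (show (-1 : ℤ) ≤ 0 by omega) _ (t.le_shift 0 1 (-1) (by omega) _ (hL X))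
  have hGE1 : ∀ X : C, t.ge 1 ((G.obj X)⟦(-1 : ℤ)⟧) := fun X =>
    t.ge_antitone (show (1 : ℤ) ≤ 2 by omega) _ (t.ge_shift 1 (-1) 2 (by omega) _ (hG X))
  have zshift : ∀ {X Y : C} (f : (L.obj X)⟦(1 : ℤ)⟧ ⟶ (G.obj Y)⟦(1 : ℤ)⟧), f = 0 := by
    intro X Y f
    obtain ⟨g, rfl⟩ := (shiftFunctor C (1 : ℤ)).map_surjective f
    rw [z0 (hL X) (hG Y) g, Functor.map_zero]
  -- cancellation lemmas
  have ιcancel : ∀ (X : C) {W : C} (_ : ∀ f : W ⟶ (G.obj X)⟦(-1 : ℤ)⟧, f = 0)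
      (f g : W ⟶ L.obj X), f ≫ ι.app X = g ≫ ι.app X → f = g := by
    intro X W hW f g hfg
    have h0 : (f - g) ≫ (Triangle.mk (ι.app X) (π.app X) (δ X)).invRotate.mor₂ = 0 := by
      dsimp
      erw [Preadditive.sub_comp, hfg, sub_self]
    obtain ⟨h, hh⟩ := Triangle.coyoneda_exact₂ _ (inv_rot_of_distTriang _ (htr X)) (f - g) h0
    erw [hW h, zero_comp] at hh
    exact sub_eq_zero.1 hh
  have ι1cancel : ∀ (X : C) {W : C} (_ : ∀ f : W ⟶ G.obj X, f = 0)
      (f g : W ⟶ (L.obj X)⟦(1 : ℤ)⟧),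
      f ≫ (ι.app X)⟦(1 : ℤ)⟧' = g ≫ (ι.app X)⟦(1 : ℤ)⟧' → f = g := by
    intro X W hW f g hfg
    have h0 : (f - g) ≫ (Triangle.mk (ι.app X) (π.app X) (δ X)).rotate.rotate.mor₂ = 0 := by
      dsimp
      erw [Preadditive.comp_neg, Preadditive.sub_comp, hfg, sub_self, neg_zero]
    obtain ⟨h, hh⟩ := Triangle.coyoneda_exact₂ _
      (rot_of_distTriang _ (rot_of_distTriang _ (htr X))) (f - g) h0
    erw [hW h, zero_comp] at hh
    exact sub_eq_zero.1 hh
  have πcancel : ∀ (X : C) {W : C} (_ : ∀ f : (L.obj X)⟦(1 : ℤ)⟧ ⟶ W, f = 0)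
      (f g : G.obj X ⟶ W), π.app X ≫ f = π.app X ≫ g → f = g := by
    intro X W hW f g hfg
    have h0 : (Triangle.mk (ι.app X) (π.app X) (δ X)).rotate.mor₁ ≫ (f - g) = 0 := by
      dsimp
      erw [Preadditive.comp_sub, hfg, sub_self]
    obtain ⟨h, hh⟩ := Triangle.yoneda_exact₂ _ (rot_of_distTriang _ (htr X)) (f - g) h0
    dsimp at hh
    erw [hW h, comp_zero] at hh
    exact sub_eq_zero.1 hh
  -- naturality
  have natιa : L.map a ≫ ι.app B = ι.app A ≫ a := by simpa using ι.naturality a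
  have natιb : L.map b ≫ ι.app C' = ι.app B ≫ b := by simpa using ι.naturality b
  have natπa : π.app A ≫ G.map a = a ≫ π.app B := by simpa using (π.naturality a).symm
  have natπb : π.app B ≫ G.map b = b ≫ π.app C' := by simpa using (π.naturality b).symm
  -- existence of c₀
  obtain ⟨g0, hg0⟩ := Triangle.coyoneda_exact₁ _ (rot_of_distTriang _ (htr A))
    (ι.app C' ≫ c) (by dsimp; erw [Category.assoc]; exact hz)
  dsimp at hg0
  obtain ⟨g0, hg0⟩ : ∃ g0 : L.obj C' ⟶ (L.obj A)⟦(1 : ℤ)⟧,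
      ι.app C' ≫ c = g0 ≫ (-(ι.app A)⟦(1 : ℤ)⟧') := ⟨g0, hg0⟩
  have hc₀ : (-g0) ≫ (ι.app A)⟦(1 : ℤ)⟧' = ι.app C' ≫ c := by
    rw [hg0, Preadditive.neg_comp, Preadditive.comp_neg]
  set c₀ : L.obj C' ⟶ (L.obj A)⟦(1 : ℤ)⟧ := -g0 with hc₀def
  have c₀uniq : ∀ y : L.obj C' ⟶ (L.obj A)⟦(1 : ℤ)⟧,
      y ≫ (ι.app A)⟦(1 : ℤ)⟧' = ι.app C' ≫ c → y = c₀ :=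
    fun y hy => ι1cancel A (fun f => z0 (hL C') (hG A) f) y c₀ (by rw [hy, hc₀])
  -- existence of c₁
  obtain ⟨c₁, hc₁⟩ := Triangle.yoneda_exact₂ _ (htr C')
    (c ≫ (π.app A)⟦(1 : ℤ)⟧') (by exact hz)
  dsimp at hc₁
  obtain ⟨c₁, hc₁⟩ : ∃ c₁ : G.obj C' ⟶ (G.obj A)⟦(1 : ℤ)⟧,
      c ≫ (π.app A)⟦(1 : ℤ)⟧' = π.app C' ≫ c₁ := ⟨c₁, hc₁⟩
  have c₁uniq : ∀ y : G.obj C' ⟶ (G.obj A)⟦(1 : ℤ)⟧,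
      π.app C' ≫ y = c ≫ (π.app A)⟦(1 : ℤ)⟧' → y = c₁ :=
    fun y hy => πcancel C' (fun f => zshift f) y c₁ (by rw [hy]; exact hc₁)
  obtain ⟨ιC, hιC⟩ : ∃ f : L.obj C' ⟶ C', f = ι.app C' := ⟨_, rfl⟩
  obtain ⟨πA, hπA⟩ : ∃ f : A ⟶ G.obj A, f = π.app A := ⟨_, rfl⟩
  -- L-side: cone of L.map a
  obtain ⟨Z, u, z, hTZ⟩ := distinguished_cocone_triangle (L.map a)
  obtain ⟨ψ, hψ₁, hψ₂⟩ := complete_distinguished_triangle_morphism _ _ hTZ hdist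
    (ι.app A) (ι.app B) (by exact natιa)
  obtain ⟨ψ, hψ₁, hψ₂⟩ : ∃ ψ : Z ⟶ C', u ≫ ψ = ι.app B ≫ b ∧
      z ≫ (ι.app A)⟦(1 : ℤ)⟧' = ψ ≫ c := ⟨ψ, hψ₁, hψ₂⟩
  have hZ : ∀ {Y : C}, t.ge 1 Y → ∀ f : Z ⟶ Y, f = 0 := by
    intro Y hY f
    obtain ⟨h, hh⟩ := Triangle.yoneda_exact₂ _ (rot_of_distTriang _ hTZ) f
      (z0 (hL B) hY _)
    rw [hh, z0 (hLE1 A) hY h]; exact comp_zero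
  have hψπ : ψ ≫ π.app C' = 0 := hZ (hG C') _
  obtain ⟨η, hη⟩ := Triangle.coyoneda_exact₂ _ (htr C') ψ (by exact hψπ)
  dsimp at hη
  obtain ⟨η, hη⟩ : ∃ η : Z ⟶ L.obj C', ψ = η ≫ ι.app C' := ⟨η, hη⟩
  have hzη : z = η ≫ c₀ := by
    apply ι1cancel A (fun f => hZ (hG A) f)
    rw [Category.assoc, hc₀, ← Category.assoc, ← hη]
    exact hψ₂
  have huη : u ≫ η = L.map b := by
    apply ιcancel C' (fun f => z0 (hL B) (hGE1 C') f)
    rw [Category.assoc, ← hη, hψ₁, natιb]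
  -- construct θ
  have h31 : c ≫ a⟦(1 : ℤ)⟧' = 0 := comp_distTriang_mor_zero₃₁ _ hdist
  have hc₀La : c₀ ≫ (L.map a)⟦(1 : ℤ)⟧' = 0 := by
    apply ι1cancel B (fun f => z0 (hL C') (hG B) f)
    rw [zero_comp, Category.assoc, ← Functor.map_comp, natιa, Functor.map_comp, ← Category.assoc, hc₀,
      Category.assoc, h31, comp_zero]
  obtain ⟨θ', hθ'⟩ := Triangle.coyoneda_exact₁ _ hTZ c₀ (by exact hc₀La)
  obtain ⟨θ', hθ'⟩ : ∃ θ' : L.obj C' ⟶ Z, c₀ = θ' ≫ z := ⟨θ', hθ'⟩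
  have hdc : (θ' ≫ ψ - ιC) ≫ c = 0 := by
    rw [hιC, Preadditive.sub_comp, Category.assoc, ← hψ₂, ← Category.assoc, ← hθ', hc₀def, hc₀, sub_self]
  obtain ⟨e, he⟩ := Triangle.coyoneda_exact₃ _ hdist (θ' ≫ ψ - ιC) hdc
  obtain ⟨e₀, he₀⟩ := Triangle.coyoneda_exact₂ _ (htr B) e (z0 (hL C') (hG B) _)
  dsimp at he₀
  set θ : L.obj C' ⟶ Z := θ' - e₀ ≫ u with hθdef
  have hθψ : θ ≫ ψ = ι.app C' := by
    erw [hθdef, Preadditive.sub_comp, Category.assoc, hψ₁, ← Category.assoc, ← he₀, ← he, sub_sub_cancel, hιC]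
  have h23Z : u ≫ z = 0 := comp_distTriang_mor_zero₂₃ _ hTZ
  have hθz : θ ≫ z = c₀ := by
    erw [hθdef, Preadditive.sub_comp, Category.assoc, h23Z, comp_zero, sub_zero, ← hθ']
  have hθη : θ ≫ η = 𝟙 (L.obj C') := by
    apply ιcancel C' (fun f => z0 (hL C') (hGE1 C') f)
    rw [Category.assoc, ← hη, hθψ, Category.id_comp]
  have hηθ : η ≫ θ = 𝟙 Z := by
    have hkz : (η ≫ θ - 𝟙 Z) ≫ z = 0 := by
      rw [Preadditive.sub_comp, Category.assoc, hθz, Category.id_comp, ← hzη, sub_self]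
    obtain ⟨e', he'⟩ := Triangle.coyoneda_exact₃ _ hTZ (η ≫ θ - 𝟙 Z) hkz
    have hkψ : (η ≫ θ - 𝟙 Z) ≫ ψ = 0 := by
      rw [Preadditive.sub_comp, Category.assoc, hθψ, ← hη, Category.id_comp, sub_self]
    have he'b : (e' ≫ ι.app B) ≫ b = 0 := by
      erw [Category.assoc, ← hψ₁, ← Category.assoc, ← he', hkψ]
    obtain ⟨f', hf'⟩ := Triangle.coyoneda_exact₂ _ hdist (e' ≫ ι.app B) he'b
    obtain ⟨f'', hf''⟩ := Triangle.coyoneda_exact₂ _ (htr A) f' (hZ (hG A) _)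
    dsimp at hf''
    have he'' : e' = f'' ≫ L.map a := by
      apply ιcancel B (fun f => hZ (hGE1 B) f)
      erw [hf', hf'', Category.assoc, Category.assoc, natιa]; rfl
    have h12Z : L.map a ≫ u = 0 := comp_distTriang_mor_zero₁₂ _ hTZ
    have hfin : η ≫ θ - 𝟙 Z = 0 := by
      erw [he', he'', Category.assoc, h12Z, comp_zero]; rfl
    exact sub_eq_zero.1 hfin
  have Ldist : ∀ c₀' : L.obj C' ⟶ (L.obj A)⟦(1 : ℤ)⟧,
      c₀' ≫ (ι.app A)⟦(1 : ℤ)⟧' = ι.app C' ≫ c →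
      Triangle.mk (L.map a) (L.map b) c₀' ∈ distTriang C := by
    intro c₀' h
    rw [c₀uniq c₀' h]
    refine isomorphic_distinguished _ hTZ _ ?_
    refine Triangle.isoMk _ _ (Iso.refl _) (Iso.refl _) (Iso.mk θ η hθη hηθ) ?_ ?_ ?_
    · dsimp; erw [Category.comp_id, Category.id_comp]; rfl
    · dsimp; erw [Category.id_comp, ← huη, Category.assoc, hηθ, Category.comp_id]; rfl
    · dsimp; erw [CategoryTheory.Functor.map_id, Category.comp_id, hθz]; rfl
  -- G-side: fiber of G.map b
  obtain ⟨F, v₂, w₂, hTF⟩ := distinguished_cocone_triangle₁ (G.map b)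
  obtain ⟨χ, hχ₁, hχ₂⟩ := complete_distinguished_triangle_morphism
    (Triangle.mk a b c).rotate (Triangle.mk v₂ (G.map b) w₂).rotate
    (rot_of_distTriang _ hdist) (rot_of_distTriang _ hTF) (π.app B) (π.app C')
    (by exact natπb.symm)
  obtain ⟨χ, hχ₁, hχ₂⟩ : ∃ χ : A⟦(1 : ℤ)⟧ ⟶ F⟦(1 : ℤ)⟧,
      (c ≫ χ = π.app C' ≫ w₂) ∧
      ((-a⟦(1 : ℤ)⟧') ≫ (π.app B)⟦(1 : ℤ)⟧' = χ ≫ (-v₂⟦(1 : ℤ)⟧')) := ⟨χ, hχ₁, hχ₂⟩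
  obtain ⟨φ, hφch⟩ := (shiftFunctor C (1 : ℤ)).map_surjective χ
  have hφ₁ : c ≫ φ⟦(1 : ℤ)⟧' = π.app C' ≫ w₂ := by rw [hφch]; exact hχ₁
  have hφ₂ : φ ≫ v₂ = a ≫ π.app B := by
    apply (shiftFunctor C (1 : ℤ)).map_injective
    rw [Functor.map_comp, Functor.map_comp, hφch]
    rw [Preadditive.neg_comp, Preadditive.comp_neg, neg_inj] at hχ₂
    exact hχ₂.symm
  have hF : ∀ {Y : C}, t.le 0 Y → ∀ f : Y ⟶ F, f = 0 := by
    intro Y hY f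
    obtain ⟨h, hh⟩ := Triangle.coyoneda_exact₂ _ (inv_rot_of_distTriang _ hTF) f
      (z0 hY (hG B) _)
    rw [hh, z0 hY (hGE1 C') h]; exact zero_comp
  have hLF1 : ∀ {X : C} (f : (L.obj X)⟦(1 : ℤ)⟧ ⟶ F⟦(1 : ℤ)⟧), f = 0 := by
    intro X f
    obtain ⟨g, rfl⟩ := (shiftFunctor C (1 : ℤ)).map_surjective f
    rw [hF (hL X) g, Functor.map_zero]
  obtain ⟨μ, hμ⟩ := Triangle.yoneda_exact₂ _ (htr A) φ (hF (hL A) _)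
  dsimp at hμ
  obtain ⟨μ, hμ⟩ : ∃ μ : G.obj A ⟶ F, φ = π.app A ≫ μ := ⟨μ, hμ⟩
  have hGa : G.map a = μ ≫ v₂ := by
    apply πcancel A (fun f => z0 (hLE1 A) (hG B) f)
    erw [natπa, ← Category.assoc, ← hμ, hφ₂]
  have hwμ : c₁ ≫ μ⟦(1 : ℤ)⟧' = w₂ := by
    apply πcancel C' (fun f => hLF1 f)
    erw [← Category.assoc, ← hc₁, Category.assoc, ← Functor.map_comp, ← hμ, hφ₁]
  -- construct ν
  have hGbc₁ : G.map b ≫ c₁ = 0 := by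
    apply πcancel B (fun f => zshift f)
    have h23 : b ≫ c = 0 := comp_distTriang_mor_zero₂₃ _ hdist
    rw [← Category.assoc, natπb, Category.assoc, ← hc₁, ← Category.assoc, h23, zero_comp, comp_zero]
  obtain ⟨ν₁, hν₁⟩ := Triangle.yoneda_exact₂ _ (rot_of_distTriang _ hTF) c₁
    (by exact hGbc₁)
  obtain ⟨ν₁, hν₁⟩ : ∃ ν₁ : F⟦(1 : ℤ)⟧ ⟶ (G.obj A)⟦(1 : ℤ)⟧, c₁ = w₂ ≫ ν₁ := ⟨ν₁, hν₁⟩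
  obtain ⟨ν₀, hν₀⟩ := (shiftFunctor C (1 : ℤ)).map_surjective ν₁
  have hcd : c ≫ (φ ≫ ν₀ - πA)⟦(1 : ℤ)⟧' = 0 := by
    rw [hπA, Functor.map_sub, Preadditive.comp_sub, Functor.map_comp, ← Category.assoc, hφ₁, Category.assoc, hν₀, ← hν₁,
      hc₁, sub_self]
  obtain ⟨h₀, hh₀⟩ := Triangle.yoneda_exact₃ _ (rot_of_distTriang _ hdist)
    ((φ ≫ ν₀ - πA)⟦(1 : ℤ)⟧') (by exact hcd)
  obtain ⟨h₀, hh₀⟩ : ∃ h₀ : B⟦(1 : ℤ)⟧ ⟶ (G.obj A)⟦(1 : ℤ)⟧,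
      (φ ≫ ν₀ - πA)⟦(1 : ℤ)⟧' = (-a⟦(1 : ℤ)⟧') ≫ h₀ := ⟨h₀, hh₀⟩
  obtain ⟨eB, heB⟩ := (shiftFunctor C (1 : ℤ)).map_surjective h₀
  have hd' : φ ≫ ν₀ - πA = a ≫ (-eB) := by
    apply (shiftFunctor C (1 : ℤ)).map_injective
    rw [hh₀, Functor.map_comp, Functor.map_neg, heB, Preadditive.neg_comp, Preadditive.comp_neg]
  have hιe : ι.app B ≫ (-eB) = 0 := z0 (hL B) (hG A) _
  obtain ⟨e₀', he₀'⟩ := Triangle.yoneda_exact₂ _ (htr B) (-eB) hιe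
  dsimp at he₀'
  obtain ⟨e₀', he₀'⟩ : ∃ e₀' : G.obj B ⟶ G.obj A, -eB = π.app B ≫ e₀' := ⟨e₀', he₀'⟩
  set ν : F ⟶ G.obj A := ν₀ - v₂ ≫ e₀' with hνdef
  have hφν : φ ≫ ν = π.app A := by
    rw [hνdef, Preadditive.comp_sub, ← Category.assoc, hφ₂, Category.assoc, ← he₀', ← hd', sub_sub_cancel, hπA]
  have h31F : w₂ ≫ v₂⟦(1 : ℤ)⟧' = 0 := comp_distTriang_mor_zero₃₁ _ hTF
  have hwν : w₂ ≫ ν⟦(1 : ℤ)⟧' = c₁ := by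
    rw [hνdef, Functor.map_sub, Preadditive.comp_sub, hν₀, ← hν₁, Functor.map_comp, ← Category.assoc, h31F,
      zero_comp, sub_zero]
  have hμν : μ ≫ ν = 𝟙 (G.obj A) := by
    apply πcancel A (fun f => z0 (hLE1 A) (hG A) f)
    rw [← Category.assoc, ← hμ, hφν, Category.comp_id]
  have hνμ : ν ≫ μ = 𝟙 F := by
    have hφk : φ ≫ (ν ≫ μ - 𝟙 F) = 0 := by
      rw [Preadditive.comp_sub, ← Category.assoc, hφν, ← hμ, Category.comp_id, sub_self]
    have hwk : w₂ ≫ ((ν ≫ μ - 𝟙 F)⟦(1 : ℤ)⟧') = 0 := by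
      rw [Functor.map_sub, Preadditive.comp_sub, Functor.map_comp, ← Category.assoc, hwν, hwμ,
        CategoryTheory.Functor.map_id, Category.comp_id, sub_self]
    obtain ⟨h₁', hh₁'⟩ := Triangle.yoneda_exact₃ _ (rot_of_distTriang _ hTF)
      ((ν ≫ μ - 𝟙 F)⟦(1 : ℤ)⟧') (by exact hwk)
    obtain ⟨h₁', hh₁'⟩ : ∃ h₁' : (G.obj B)⟦(1 : ℤ)⟧ ⟶ F⟦(1 : ℤ)⟧,
        (ν ≫ μ - 𝟙 F)⟦(1 : ℤ)⟧' = (-v₂⟦(1 : ℤ)⟧') ≫ h₁' := ⟨h₁', hh₁'⟩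
    obtain ⟨h₁, hh₁⟩ := (shiftFunctor C (1 : ℤ)).map_surjective h₁'
    have hk : ν ≫ μ - 𝟙 F = v₂ ≫ (-h₁) := by
      apply (shiftFunctor C (1 : ℤ)).map_injective
      rw [hh₁', Functor.map_comp, Functor.map_neg, hh₁, Preadditive.neg_comp, Preadditive.comp_neg]
    have hab : a ≫ (π.app B ≫ (-h₁)) = 0 := by
      rw [← Category.assoc, ← hφ₂, Category.assoc, ← hk, hφk]
    obtain ⟨f₂, hf₂⟩ := Triangle.yoneda_exact₂ _ hdist (π.app B ≫ (-h₁)) hab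
    obtain ⟨f₂, hf₂⟩ : ∃ f₂ : C' ⟶ F, π.app B ≫ (-h₁) = b ≫ f₂ := ⟨f₂, hf₂⟩
    obtain ⟨f₃, hf₃⟩ := Triangle.yoneda_exact₂ _ (htr C') f₂ (hF (hL C') _)
    dsimp at hf₃
    obtain ⟨f₃, hf₃⟩ : ∃ f₃ : G.obj C' ⟶ F, f₂ = π.app C' ≫ f₃ := ⟨f₃, hf₃⟩
    have hh₁m : -h₁ = G.map b ≫ f₃ := by
      apply πcancel B (fun f => hF (hLE1 B) f)
      rw [hf₂, hf₃, ← Category.assoc, ← natπb, Category.assoc]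
    have h12F : v₂ ≫ G.map b = 0 := comp_distTriang_mor_zero₁₂ _ hTF
    have hfin : ν ≫ μ - 𝟙 F = 0 := by
      rw [hk, hh₁m, ← Category.assoc, h12F, zero_comp]
    exact sub_eq_zero.1 hfin
  have Gdist : ∀ c₁' : G.obj C' ⟶ (G.obj A)⟦(1 : ℤ)⟧,
      π.app C' ≫ c₁' = c ≫ (π.app A)⟦(1 : ℤ)⟧' →
      Triangle.mk (G.map a) (G.map b) c₁' ∈ distTriang C := by
    intro c₁' h
    rw [c₁uniq c₁' h]
    refine isomorphic_distinguished _ hTF _ ?_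
    refine Triangle.isoMk _ _ (Iso.mk μ ν hμν hνμ) (Iso.refl _) (Iso.refl _) ?_ ?_ ?_
    · dsimp; erw [Category.comp_id, hGa]; rfl
    · dsimp; erw [Category.comp_id, Category.id_comp]; rfl
    · dsimp; erw [Category.id_comp, hwμ]; rfl
  exact ⟨⟨c₀, hc₀, c₀uniq⟩, Ldist, ⟨c₁, hc₁.symm, c₁uniq⟩, Gdist⟩
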